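/- Let Φ : M_n(ℂ) → M_n(ℂ) be a linear, positive, trace-preserving map, let ρ° be a state with Φ(ρ°) = ρ°, and let ε ∈ (0,1] be such that Φ(ρ) ≥ ε·ρ° (Loewner order) for every state ρ. Then for every state ρ, the iterates Φ^k(ρ) converge to ρ° as k → ∞; in particular ‖Φ^k(ρ) − ρ°‖₁ → 0. -/

import Mathlib

open scoped ComplexOrder

/-- The trace norm of a matrix: `‖A‖₁ = Tr √(Aᴴ A)`.  For a Hermitian matrix this is
the sum of the absolute values of its eigenvalues. -/
noncomputable def traceNorm {n : ℕ} (A : Matrix (Fin n) (Fin n) ℂ) : ℝ :=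
  ((Matrix.posSemidef_conjTranspose_mul_self A).1.eigenvectorUnitary.1 *
    Matrix.diagonal ((fun x : ℝ => (x : ℂ)) ∘ Real.sqrt ∘ (Matrix.posSemidef_conjTranspose_mul_self A).1.eigenvalues) *
    star (Matrix.posSemidef_conjTranspose_mul_self A).1.eigenvectorUnitary.1).trace.re

open Matrix

lemma psd_smul {n : ℕ} {A : Matrix (Fin n) (Fin n) ℂ} (hA : A.PosSemidef)
    {c : ℝ} (hc : 0 ≤ c) : ((c : ℂ) • A).PosSemidef := by
  constructor
  · unfold Matrix.IsHermitian
    rw [conjTranspose_smul, hA.1.eq]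
    simp [Complex.ext_iff]
  · intro x
    exact (hA.smul (a := (c : ℂ)) (by exact_mod_cast hc)).2 x

lemma psd_diag {n : ℕ} {A : Matrix (Fin n) (Fin n) ℂ} (hA : A.PosSemidef) (i : Fin n) :
    0 ≤ (A i i).re := by
  have h := hA.re_dotProduct_nonneg (Pi.single i 1)
  simpa [dotProduct, Matrix.mulVec, Pi.single_apply, Finset.sum_ite_eq,
    Finset.sum_ite_eq'] using h

-- entry of BᴴB in terms of columns
lemma psd_entry_bound {n : ℕ} {A : Matrix (Fin n) (Fin n) ℂ} (hA : A.PosSemidef)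
    (i j : Fin n) : ‖A i j‖ ≤ Real.sqrt ((A i i).re) * Real.sqrt ((A j j).re) := by
  classical
  open MatrixOrder in
  obtain ⟨B, hB⟩ := CStarAlgebra.nonneg_iff_eq_star_mul_self.mp hA.nonneg
  rw [Matrix.star_eq_conjTranspose] at hB
  subst hB
  have hentry : ∀ p q : Fin n, ((Bᴴ * B) p q) = ∑ k, star (B k p) * B k q := by
    intro p q
    simp [Matrix.mul_apply, Matrix.conjTranspose_apply]
  have hdiag : ∀ p : Fin n, ((Bᴴ * B) p p).re = ∑ k, ‖B k p‖ ^ 2 := by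
    intro p
    rw [hentry p p, Complex.re_sum]
    congr 1; ext k
    simp [← Complex.normSq_eq_norm_sq, Complex.normSq_eq_conj_mul_self, Complex.normSq_apply]
  calc ‖(Bᴴ * B) i j‖ ≤ ∑ k, ‖B k i‖ * ‖B k j‖ := by
        rw [hentry]
        refine (norm_sum_le _ _).trans (le_of_eq ?_)
        congr 1; ext k; simp
    _ ≤ Real.sqrt (∑ k, ‖B k i‖ ^ 2) * Real.sqrt (∑ k, ‖B k j‖ ^ 2) :=
        Real.sum_mul_le_sqrt_mul_sqrt _ _ _
    _ = Real.sqrt (((Bᴴ * B) i i).re) * Real.sqrt (((Bᴴ * B) j j).re) := by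
        rw [hdiag, hdiag]


lemma tn_psd {n : ℕ} (A : Matrix (Fin n) (Fin n) ℂ) :
    ((Matrix.posSemidef_conjTranspose_mul_self A).1.eigenvectorUnitary.1 *
    Matrix.diagonal ((fun x : ℝ => (x : ℂ)) ∘ Real.sqrt ∘ (Matrix.posSemidef_conjTranspose_mul_self A).1.eigenvalues) *
    star (Matrix.posSemidef_conjTranspose_mul_self A).1.eigenvectorUnitary.1).PosSemidef := by
  have h := Matrix.PosSemidef.diagonal (n := Fin n) (R := ℂ)
    (d := ((fun x : ℝ => (x : ℂ)) ∘ Real.sqrt ∘ (Matrix.posSemidef_conjTranspose_mul_self A).1.eigenvalues))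
    (fun i => by simp only [Function.comp_apply, Pi.zero_apply]; exact_mod_cast Real.sqrt_nonneg _)
  rw [Matrix.star_eq_conjTranspose]
  exact h.mul_mul_conjTranspose_same _

lemma tn_sq {n : ℕ} (A : Matrix (Fin n) (Fin n) ℂ) :
    ((Matrix.posSemidef_conjTranspose_mul_self A).1.eigenvectorUnitary.1 *
    Matrix.diagonal ((fun x : ℝ => (x : ℂ)) ∘ Real.sqrt ∘ (Matrix.posSemidef_conjTranspose_mul_self A).1.eigenvalues) *
    star (Matrix.posSemidef_conjTranspose_mul_self A).1.eigenvectorUnitary.1) *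
    ((Matrix.posSemidef_conjTranspose_mul_self A).1.eigenvectorUnitary.1 *
    Matrix.diagonal ((fun x : ℝ => (x : ℂ)) ∘ Real.sqrt ∘ (Matrix.posSemidef_conjTranspose_mul_self A).1.eigenvalues) *
    star (Matrix.posSemidef_conjTranspose_mul_self A).1.eigenvectorUnitary.1) = Aᴴ * A := by
  set hA := Matrix.posSemidef_conjTranspose_mul_self A
  set U := hA.1.eigenvectorUnitary
  set D := Matrix.diagonal ((fun x : ℝ => (x : ℂ)) ∘ Real.sqrt ∘ hA.1.eigenvalues)
  have hUU : star U.1 * U.1 = 1 := Unitary.coe_star_mul_self U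
  have hspec := hA.1.spectral_theorem
  rw [Unitary.conjStarAlgAut_apply] at hspec
  calc U.1 * D * star U.1 * (U.1 * D * star U.1) = U.1 * D * (star U.1 * U.1) * D * star U.1 := by
        simp only [Matrix.mul_assoc]
    _ = U.1 * (D * D) * star U.1 := by rw [hUU, Matrix.mul_one, Matrix.mul_assoc U.1 D D]
    _ = U.1 * Matrix.diagonal (RCLike.ofReal ∘ hA.1.eigenvalues) * star U.1 := by
        simp only [D, Matrix.diagonal_mul_diagonal]
        congr 2
        congr 1
        funext i
        simp only [Function.comp_apply]
        rw [← Complex.ofReal_mul, Real.mul_self_sqrt (hA.eigenvalues_nonneg i)]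
        rfl
    _ = Aᴴ * A := hspec.symm

lemma traceNorm_nonneg {n : ℕ} (A : Matrix (Fin n) (Fin n) ℂ) : 0 ≤ traceNorm A := by
  unfold traceNorm
  rw [Matrix.trace, Complex.re_sum]
  exact Finset.sum_nonneg fun i _ =>
    psd_diag (tn_psd A) i

lemma traceNorm_le_sum {n : ℕ} (A : Matrix (Fin n) (Fin n) ℂ) :
    traceNorm A ≤ ∑ i, ∑ j, ‖A j i‖ := by
  set hA := Matrix.posSemidef_conjTranspose_mul_self A
  set S := (hA.1.eigenvectorUnitary.1 *
    Matrix.diagonal ((fun x : ℝ => (x : ℂ)) ∘ Real.sqrt ∘ hA.1.eigenvalues) *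
    star hA.1.eigenvectorUnitary.1) with hSdef
  have hS : S.PosSemidef := tn_psd A
  have hSS : S * S = Aᴴ * A := tn_sq A
  unfold traceNorm
  rw [Matrix.trace, Complex.re_sum]
  refine Finset.sum_le_sum fun i _ => ?_
  -- (S i i).re ≤ ∑ j, ‖A j i‖
  have h1 : (S i i).re ^ 2 ≤ ∑ j, ‖A j i‖ ^ 2 := by
    have hsq : ((S * S) i i).re = ∑ j, ‖S i j‖ ^ 2 := by
      rw [Matrix.mul_apply, Complex.re_sum]
      congr 1; ext j
      have : S j i = star (S i j) := by
        conv_lhs => rw [← hS.1.eq]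
        simp [Matrix.conjTranspose_apply]
      rw [this]
      simp [← Complex.normSq_eq_norm_sq, Complex.normSq_apply, mul_comm]
    have hsq2 : ((S * S) i i).re = ∑ j, ‖A j i‖ ^ 2 := by
      rw [hSS, Matrix.mul_apply, Complex.re_sum]
      congr 1; ext j
      simp [Matrix.conjTranspose_apply, ← Complex.normSq_eq_norm_sq, Complex.normSq_apply]
    have hterm : (S i i).re ^ 2 ≤ ‖S i i‖ ^ 2 := by
      have := Complex.sq_norm (S i i)
      have h2 := Complex.normSq_apply (S i i)
      nlinarith [sq_nonneg ((S i i).im), Complex.sq_norm (S i i), Complex.normSq_apply (S i i)]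
    refine hterm.trans ?_
    rw [← hsq2, hsq]
    exact Finset.single_le_sum (f := fun j => ‖S i j‖ ^ 2) (fun j _ => by positivity)
      (Finset.mem_univ i)
  calc (S i i).re ≤ Real.sqrt ((S i i).re ^ 2) := by
        rw [Real.sqrt_sq_eq_abs]; exact le_abs_self _
    _ ≤ Real.sqrt (∑ j, ‖A j i‖ ^ 2) := Real.sqrt_le_sqrt h1
    _ ≤ Real.sqrt ((∑ j, ‖A j i‖) ^ 2) := Real.sqrt_le_sqrt
        (Finset.sum_sq_le_sq_sum_of_nonneg fun j _ => norm_nonneg _)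
    _ = ∑ j, ‖A j i‖ := Real.sqrt_sq (Finset.sum_nonneg fun j _ => norm_nonneg _)

/-- Primitivity from Doeblin-type minorization: the iterates of every state converge in
trace norm to the stationary state. -/
theorem doeblin_iterates_tendsto_stationary {n : ℕ}
    (Φ : Module.End ℂ (Matrix (Fin n) (Fin n) ℂ))
    (hpos : ∀ A : Matrix (Fin n) (Fin n) ℂ, A.PosSemidef → (Φ A).PosSemidef)
    (htr : ∀ A : Matrix (Fin n) (Fin n) ℂ, (Φ A).trace = A.trace)
    (ρ₀ : Matrix (Fin n) (Fin n) ℂ) (hρ₀ : ρ₀.PosSemidef) (hρ₀tr : ρ₀.trace = 1)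
    (hfix : Φ ρ₀ = ρ₀)
    (ε : ℝ) (hε0 : 0 < ε) (hε1 : ε ≤ 1)
    (hDoeblin : ∀ ρ : Matrix (Fin n) (Fin n) ℂ, ρ.PosSemidef → ρ.trace = 1 →
      (Φ ρ - (ε : ℂ) • ρ₀).PosSemidef)
    (ρ : Matrix (Fin n) (Fin n) ℂ) (hρ : ρ.PosSemidef) (hρtr : ρ.trace = 1) :
    Filter.Tendsto (fun k : ℕ => traceNorm ((Φ ^ k) ρ - ρ₀)) Filter.atTop (nhds 0) := by
  set ε' : ℝ := ε / 2 with hε'def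
  have hε'0 : 0 < ε' := by positivity
  have hε'1 : ε' < 1 := by linarith
  set q : ℝ := 1 - ε' with hqdef
  have hq0 : 0 < q := by simp only [hqdef]; linarith
  have hq1 : q < 1 := by simp only [hqdef]; linarith
  -- improved Doeblin with ε' < 1
  have hDoeblin' : ∀ σ : Matrix (Fin n) (Fin n) ℂ, σ.PosSemidef → σ.trace = 1 →
      (Φ σ - (ε' : ℂ) • ρ₀).PosSemidef := by
    intro σ hσ hσtr
    have h1 := hDoeblin σ hσ hσtr
    have h2 : ((ε' : ℝ) : ℂ) • ρ₀ = (ε' : ℂ) • ρ₀ := rfl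
    have key : Φ σ - (ε' : ℂ) • ρ₀ = (Φ σ - (ε : ℂ) • ρ₀) + ((ε - ε' : ℝ) : ℂ) • ρ₀ := by
      push_cast
      module
    rw [key]
    exact h1.add (psd_smul hρ₀ (by linarith))
  -- key induction
  have key : ∀ k : ℕ, ∃ σ : Matrix (Fin n) (Fin n) ℂ, σ.PosSemidef ∧ σ.trace = 1 ∧
      (Φ ^ k) ρ - ρ₀ = ((q : ℂ) ^ k) • (σ - ρ₀) := by
    intro k
    induction k with
    | zero => exact ⟨ρ, hρ, hρtr, by simp⟩
    | succ k ih =>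
      obtain ⟨σ, hσ, hσtr, hσeq⟩ := ih
      refine ⟨((q⁻¹ : ℝ) : ℂ) • (Φ σ - (ε' : ℂ) • ρ₀),
        psd_smul (hDoeblin' σ hσ hσtr) (by positivity), ?_, ?_⟩
      · rw [Matrix.trace_smul, Matrix.trace_sub, Matrix.trace_smul, htr, hσtr, hρ₀tr]
        have : ((q⁻¹ : ℝ) : ℂ) * (1 - (ε' : ℂ)) = 1 := by
          have : ((1 : ℂ) - (ε' : ℂ)) = ((q : ℝ) : ℂ) := by push_cast [hqdef]; ring
          rw [this, ← Complex.ofReal_mul, inv_mul_cancel₀ hq0.ne']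
          simp
        simpa using this
      · have hstep : (Φ ^ (k + 1)) ρ = Φ ((Φ ^ k) ρ) := by
          rw [pow_succ', Module.End.mul_apply]
        have hk : (Φ ^ k) ρ = ρ₀ + ((q : ℂ) ^ k) • (σ - ρ₀) := by
          rw [← hσeq]; abel
        rw [hstep, hk, map_add, _root_.map_smul, map_sub, hfix]
        have hc : ((q : ℝ) : ℂ) = 1 - (ε' : ℂ) := by push_cast [hqdef]; ring
        have hinv : ((q : ℝ) : ℂ) * ((q⁻¹ : ℝ) : ℂ) = 1 := by
          rw [← Complex.ofReal_mul, mul_inv_cancel₀ hq0.ne']; simp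
        calc ρ₀ + ((q : ℂ) ^ k) • (Φ σ - ρ₀) - ρ₀ = ((q : ℂ) ^ k) • (Φ σ - ρ₀) := by abel
          _ = ((q : ℂ) ^ k) • ((Φ σ - (ε' : ℂ) • ρ₀) - ((q : ℝ) : ℂ) • ρ₀) := by
              rw [hc]; congr 1; module
          _ = ((q : ℂ) ^ (k + 1)) • (((q⁻¹ : ℝ) : ℂ) • (Φ σ - (ε' : ℂ) • ρ₀) - ρ₀) := by
              rw [pow_succ]
              conv_rhs => rw [smul_sub, smul_smul, mul_assoc, hinv, mul_one]
              module
  -- squeeze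
  have hboundfn : ∀ k : ℕ, traceNorm ((Φ ^ k) ρ - ρ₀) ≤ q ^ k * (2 * n ^ 2) := by
    intro k
    obtain ⟨σ, hσ, hσtr, hσeq⟩ := key k
    -- entry bound for states
    have hstate : ∀ (τ : Matrix (Fin n) (Fin n) ℂ), τ.PosSemidef → τ.trace = 1 →
        ∀ i j, ‖τ i j‖ ≤ 1 := by
      intro τ hτ hτtr i j
      have hdle : ∀ p : Fin n, (τ p p).re ≤ 1 := by
        intro p
        have hsum : ∑ x, (τ x x).re = 1 := by
          have := congrArg Complex.re hτtr
          rwa [Matrix.trace, Complex.re_sum] at this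
        calc (τ p p).re ≤ ∑ x, (τ x x).re :=
              Finset.single_le_sum (f := fun x => (τ x x).re)
                (fun x _ => psd_diag hτ x) (Finset.mem_univ p)
          _ = 1 := hsum
      refine (psd_entry_bound hτ i j).trans ?_
      have h1 : Real.sqrt ((τ i i).re) ≤ 1 := by
        rw [show (1:ℝ) = Real.sqrt 1 by simp]
        exact Real.sqrt_le_sqrt (hdle i)
      have h2 : Real.sqrt ((τ j j).re) ≤ 1 := by
        rw [show (1:ℝ) = Real.sqrt 1 by simp]
        exact Real.sqrt_le_sqrt (hdle j)
      calc Real.sqrt ((τ i i).re) * Real.sqrt ((τ j j).re) ≤ 1 * 1 :=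
            mul_le_mul h1 h2 (Real.sqrt_nonneg _) (by norm_num)
        _ = 1 := by norm_num
    calc traceNorm ((Φ ^ k) ρ - ρ₀) ≤ ∑ i, ∑ j, ‖((Φ ^ k) ρ - ρ₀) j i‖ :=
          traceNorm_le_sum _
      _ = ∑ i : Fin n, ∑ j : Fin n, q ^ k * ‖(σ - ρ₀) j i‖ := by
          refine Finset.sum_congr rfl fun i _ => Finset.sum_congr rfl fun j _ => ?_
          rw [hσeq]
          simp only [Matrix.smul_apply, norm_smul, norm_pow, Complex.norm_real,
            Real.norm_eq_abs, abs_of_nonneg hq0.le]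
      _ ≤ ∑ i : Fin n, ∑ j : Fin n, q ^ k * 2 := by
          refine Finset.sum_le_sum fun i _ => Finset.sum_le_sum fun j _ => ?_
          refine mul_le_mul_of_nonneg_left ?_ (pow_nonneg hq0.le k)
          calc ‖(σ - ρ₀) j i‖ = ‖σ j i - ρ₀ j i‖ := by simp [Matrix.sub_apply]
            _ ≤ ‖σ j i‖ + ‖ρ₀ j i‖ := norm_sub_le _ _
            _ ≤ 1 + 1 := add_le_add (hstate σ hσ hσtr j i) (hstate ρ₀ hρ₀ hρ₀tr j i)
            _ = 2 := by norm_num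
      _ = q ^ k * (2 * n ^ 2) := by
          simp [Finset.sum_const, Finset.card_univ]
          ring
  have hg : Filter.Tendsto (fun k : ℕ => q ^ k * (2 * n ^ 2)) Filter.atTop (nhds 0) := by
    have := tendsto_pow_atTop_nhds_zero_of_lt_one hq0.le hq1
    simpa using this.mul_const (2 * (n : ℝ) ^ 2)
  exact squeeze_zero (fun k => traceNorm_nonneg _) hboundfn hg
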